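/- Let R be an integral domain that is not a field. Then R is semiprimitive (its Jacobson radical is zero) if and only if the group of units U(R) is not open in the Macías topology on R \ {0}. -/

import Mathlib

/-- For nonzero `k`, the basic set `σₖ⁰ = {s ≠ 0 : ⟨k⟩ + ⟨s⟩ = R}` of the Macías topology. -/
def sigma0 (R : Type*) [CommRing R] (k : R) : Set {x : R // x ≠ 0} :=
  {s | Ideal.span {k} + Ideal.span {s.1} = ⊤}

/-- The Macías topology on `R \ {0}`, generated by the sets `σₖ⁰` for `k ≠ 0`. -/
def maciasTop (R : Type*) [CommRing R] : TopologicalSpace {x : R // x ≠ 0} :=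
  TopologicalSpace.generateFrom {U | ∃ k : R, k ≠ 0 ∧ U = sigma0 R k}

lemma mem_sigma0' {R : Type*} [CommRing R] {k : R} {s : {x : R // x ≠ 0}} :
    s ∈ sigma0 R k ↔ IsCoprime k s.1 := by
  rw [sigma0, Set.mem_setOf_eq, Submodule.add_eq_sup, ← Ideal.isCoprime_iff_sup_eq,
    Ideal.isCoprime_span_singleton_iff]

lemma key_lemma {R : Type*} [CommRing R] [IsDomain R] {U : Set {x : R // x ≠ 0}}
    (hU : TopologicalSpace.GenerateOpen {V | ∃ k : R, k ≠ 0 ∧ V = sigma0 R k} U) :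
    ∀ x ∈ U, ∃ k : R, k ≠ 0 ∧ x ∈ sigma0 R k ∧ sigma0 R k ⊆ U := by
  induction hU with
  | basic V hV =>
      obtain ⟨k, hk, rfl⟩ := hV
      exact fun x hx => ⟨k, hk, hx, subset_rfl⟩
  | univ =>
      exact fun x _ => ⟨1, one_ne_zero, mem_sigma0'.2 isCoprime_one_left,
        fun _ _ => trivial⟩
  | inter U V hU hV ihU ihV =>
      intro x hx
      obtain ⟨k1, hk1, hxk1, hsub1⟩ := ihU x hx.1
      obtain ⟨k2, hk2, hxk2, hsub2⟩ := ihV x hx.2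
      refine ⟨k1 * k2, mul_ne_zero hk1 hk2,
        mem_sigma0'.2 ((mem_sigma0'.1 hxk1).mul_left (mem_sigma0'.1 hxk2)), ?_⟩
      intro s hs
      have h := mem_sigma0'.1 hs
      exact ⟨hsub1 (mem_sigma0'.2 h.of_mul_left_left),
        hsub2 (mem_sigma0'.2 h.of_mul_left_right)⟩
  | sUnion S hS ih =>
      intro x hx
      obtain ⟨t, ht, hxt⟩ := hx
      obtain ⟨k, hk, hxk, hsub⟩ := ih t ht x hxt
      exact ⟨k, hk, hxk, hsub.trans (Set.subset_sUnion_of_mem ht)⟩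

theorem stmt9 (R : Type*) [CommRing R] [IsDomain R] (hnf : ¬ IsField R) :
    (⊥ : Ideal R).jacobson = ⊥ ↔
      ¬ @IsOpen _ (maciasTop R) {x : {x : R // x ≠ 0} | IsUnit x.1} := by
  constructor
  · intro hjac hopen
    have hgen : TopologicalSpace.GenerateOpen {V | ∃ k : R, k ≠ 0 ∧ V = sigma0 R k}
        {x : {x : R // x ≠ 0} | IsUnit x.1} := hopen
    have h1 : (⟨1, one_ne_zero⟩ : {x : R // x ≠ 0}) ∈ {x : {x : R // x ≠ 0} | IsUnit x.1} :=
      isUnit_one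
    obtain ⟨k, hk, _, hsub⟩ := key_lemma hgen _ h1
    -- k is not a unit
    have hknu : ¬ IsUnit k := by
      intro hku
      apply hnf
      obtain ⟨u, rfl⟩ := hku
      refine ⟨exists_pair_ne R, mul_comm, fun {a} ha => ?_⟩
      have hcop : IsCoprime (u : R) a := ⟨(u⁻¹ : Rˣ), 0, by simp⟩
      have ha0 : a ≠ 0 := ha
      have hmem : (⟨a, ha0⟩ : {x : R // x ≠ 0}) ∈ sigma0 R (u : R) := mem_sigma0'.2 hcop
      have hau : IsUnit a := hsub hmem
      obtain ⟨v, hv⟩ := hau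
      exact ⟨(v⁻¹ : Rˣ), by rw [← hv]; simp [mul_comm]⟩
    -- k is in every maximal ideal
    have hkjac : k ∈ (⊥ : Ideal R).jacobson := by
      rw [Ideal.jacobson]
      rw [Ideal.mem_sInf]
      rintro J ⟨-, hJ⟩
      by_contra hkJ
      obtain ⟨y, i, hiJ, hyi⟩ := hJ.exists_inv hkJ
      have hi0 : i ≠ 0 := by
        rintro rfl
        exact hknu (IsUnit.of_mul_eq_one (a := k) y (by linear_combination hyi))
      have hcop : IsCoprime k i := ⟨y, 1, by linear_combination hyi⟩
      have hiu : IsUnit i := hsub (mem_sigma0'.2 hcop : (⟨i, hi0⟩ : {x : R // x ≠ 0}) ∈ sigma0 R k)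
      exact hJ.ne_top (J.eq_top_of_isUnit_mem hiJ hiu)
    rw [hjac] at hkjac
    exact hk (by simpa using hkjac)
  · intro hnotopen
    by_contra hjac
    obtain ⟨k, hkjac, hk⟩ := Submodule.exists_mem_ne_zero_of_ne_bot hjac
    apply hnotopen
    have heq : {x : {x : R // x ≠ 0} | IsUnit x.1} = sigma0 R k := by
      ext s
      rw [Set.mem_setOf_eq, mem_sigma0']
      constructor
      · rintro ⟨u, hu⟩
        exact ⟨0, (u⁻¹ : Rˣ), by rw [← hu]; simp⟩
      · intro hcop
        by_contra hsu
        have hne : Ideal.span {s.1} ≠ ⊤ :=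
          fun h => hsu (Ideal.span_singleton_eq_top.1 h)
        obtain ⟨m, hm, hsm⟩ := Ideal.exists_le_maximal _ hne
        have hkm : k ∈ m := by
          rw [Ideal.jacobson, Ideal.mem_sInf] at hkjac
          exact hkjac ⟨bot_le, hm⟩
        have hsmem : s.1 ∈ m := hsm (Ideal.subset_span rfl)
        obtain ⟨a, b, hab⟩ := hcop
        have : (1 : R) ∈ m := hab ▸ m.add_mem (m.mul_mem_left a hkm) (m.mul_mem_left b hsmem)
        exact hm.ne_top (m.eq_top_iff_one.2 this)
    rw [heq]
    exact TopologicalSpace.GenerateOpen.basic _ ⟨k, hk, rfl⟩
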